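/- Let a(z) = ∑_{j=−n₋}^{n₊} a_j z^j be a Laurent polynomial admitting a Wiener–Hopf factorization a(z) = u(z) l(1/z), where u and l are polynomials nonvanishing on the closed unit disk. Let v and w be the Taylor coefficient sequences of the analytic functions 1/u and 1/l on a neighborhood of the closed unit disk (so v, w are absolutely summable and u·v = 1, l·w = 1 as power series), and let b = (b_k)_{k∈ℤ} be the Laurent coefficient sequence of a(z)^{−1} = w(1/z)·v(z), i.e., b_k = ∑_{m−n=k, m,n≥0} v_m w_n. Then T(a) is invertible on ℓ² and T(a)^{−1} = T(b) − H(w)H(v); in particular ‖T(a)^{−1} − T(b)‖₂ ≤ (∑_{j≥0}|w_j|)(∑_{j≥0}|v_j|). -/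

import Mathlib

/-- The bounded operator `T` on `ℓ²` is the Toeplitz operator with symbol coefficients
`a : ℤ → ℂ`, i.e. `(T x)_i = ∑_{j} a_{j-i} x_j` (indices in `ℕ`). -/
def IsToeplitzOp (T : lp (fun _ : ℕ => ℂ) 2 →L[ℂ] lp (fun _ : ℕ => ℂ) 2)
    (a : ℤ → ℂ) : Prop :=
  ∀ (x : lp (fun _ : ℕ => ℂ) 2) (i : ℕ), (T x) i = ∑' j : ℕ, a ((j : ℤ) - (i : ℤ)) * x j

/-- The bounded operator `H` on `ℓ²` is the Hankel operator `H(f)` of the power series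
with coefficients `f : ℕ → ℂ`, i.e. with entries `(H(f))_{i,j} = f_{i+j-1}` in 1-based
indexing (the constant term `f 0` is not used). -/
def IsHankelOpPS (H : lp (fun _ : ℕ => ℂ) 2 →L[ℂ] lp (fun _ : ℕ => ℂ) 2)
    (f : ℕ → ℂ) : Prop :=
  ∀ (x : lp (fun _ : ℕ => ℂ) 2) (i : ℕ), (H x) i = ∑' j : ℕ, f (i + j + 1) * x j

open scoped ENNReal NNReal

noncomputable section ToepAux

/-- zero extension of a one-sided sequence to `ℤ`. -/
def zext (f : ℕ → ℂ) (k : ℤ) : ℂ := if h : 0 ≤ k then f k.toNat else 0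

lemma zext_coe (f : ℕ → ℂ) (n : ℕ) : zext f (n : ℤ) = f n := by
  simp [zext]

lemma zext_neg (f : ℕ → ℂ) {k : ℤ} (h : k < 0) : zext f k = 0 := by
  rw [zext, dif_neg (by omega)]

lemma zext_nonneg (f : ℕ → ℂ) {k : ℤ} (h : 0 ≤ k) : zext f k = f k.toNat := by
  rw [zext, dif_pos h]

lemma zext_norm_le {f : ℕ → ℂ} (hf : Summable fun n => ‖f n‖) (k : ℤ) :
    ‖zext f k‖ ≤ ∑' n, ‖f n‖ := by
  by_cases h : 0 ≤ k
  · rw [zext, dif_pos h]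
    exact Summable.le_tsum hf _ (fun j _ => norm_nonneg _)
  · rw [zext, dif_neg h, norm_zero]
    exact tsum_nonneg fun _ => norm_nonneg _

lemma sum_ite_coe (N : ℕ) (f : ℕ → ℂ) (hf : ∀ i, N < i → f i = 0) (c : ℤ) :
    (∑ j ∈ Finset.range (N + 1), if (j : ℤ) = c then f j else 0) = zext f c := by
  by_cases hc : 0 ≤ c
  · have h1 : ∀ j : ℕ, ((j : ℤ) = c) = (j = c.toNat) := fun j => by
      apply propext; omega
    simp only [h1]
    rw [Finset.sum_ite_eq' (Finset.range (N + 1)) c.toNat f, zext, dif_pos hc]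
    by_cases h2 : c.toNat ∈ Finset.range (N + 1)
    · rw [if_pos h2]
    · rw [if_neg h2]
      rw [Finset.mem_range] at h2
      exact (hf _ (by omega)).symm
  · rw [zext, dif_neg hc]
    apply Finset.sum_eq_zero
    intro j _
    rw [if_neg (by omega)]

lemma summable_l1_mul_bdd {f : ℕ → ℂ} (hf : Summable fun d => ‖f d‖) {g : ℕ → ℂ} {C : ℝ}
    (hg : ∀ d, ‖g d‖ ≤ C) : Summable fun d => f d * g d := by
  apply Summable.of_norm_bounded (hf.mul_right C)
  intro d
  rw [norm_mul]
  exact mul_le_mul_of_nonneg_left (hg d) (norm_nonneg _)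

lemma summable_bdd_mul_l1 {f : ℕ → ℂ} (hf : Summable fun d => ‖f d‖) {g : ℕ → ℂ} {C : ℝ}
    (hg : ∀ d, ‖g d‖ ≤ C) : Summable fun d => g d * f d := by
  apply Summable.of_norm_bounded (hf.mul_left C)
  intro d
  rw [norm_mul]
  exact mul_le_mul_of_nonneg_right (hg d) (norm_nonneg _)

/-- One-sided discrete convolution identity extended to `ℤ`. -/
lemma conv_delta (g h : ℕ → ℂ)
    (hgh : ∀ n : ℕ, ∑ i ∈ Finset.range (n + 1), g i * h (n - i) = if n = 0 then 1 else 0)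
    (c : ℤ) : ∑' d : ℕ, zext g (c - (d : ℤ)) * h d = if c = 0 then 1 else 0 := by
  by_cases hc : 0 ≤ c
  · set N := c.toNat with hN
    have h1 : ∑' d : ℕ, zext g (c - (d : ℤ)) * h d
        = ∑ d ∈ Finset.range (N + 1), zext g (c - (d : ℤ)) * h d := by
      apply tsum_eq_sum
      intro d hd
      rw [Finset.mem_range] at hd
      rw [zext_neg _ (by omega), zero_mul]
    rw [h1]
    have h2 : ∀ d ∈ Finset.range (N + 1), zext g (c - (d : ℤ)) * h d = g (N - d) * h d := by
      intro d hd
      rw [Finset.mem_range] at hd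
      rw [zext_nonneg _ (by omega)]
      congr 2
      omega
    rw [Finset.sum_congr rfl h2]
    have h3 : ∑ d ∈ Finset.range (N + 1), g (N - d) * h d
        = ∑ d ∈ Finset.range (N + 1), g d * h (N - d) := by
      rw [← Finset.sum_range_reflect (fun j => g j * h (N - j)) (N + 1)]
      apply Finset.sum_congr rfl
      intro d hd
      rw [Finset.mem_range] at hd
      have e1 : N + 1 - 1 - d = N - d := by omega
      have e2 : N - (N - d) = d := by omega
      rw [e1, e2]
    rw [h3, hgh N]
    by_cases h0 : c = 0
    · rw [if_pos (by omega : N = 0), if_pos h0]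
    · rw [if_neg (by omega : ¬ N = 0), if_neg h0]
  · have h1 : ∀ d : ℕ, zext g (c - (d : ℤ)) * h d = 0 := fun d => by
      rw [zext_neg _ (by omega), zero_mul]
    rw [tsum_congr h1, tsum_zero, if_neg (by omega)]

/-- Two range-sums agree if the function vanishes from the smaller bound on. -/
lemma sum_range_congr_zero (f : ℕ → ℂ) (M N : ℕ) (h : ∀ j, min M N ≤ j → f j = 0) :
    ∑ j ∈ Finset.range M, f j = ∑ j ∈ Finset.range N, f j := by
  have hM : ∑ j ∈ Finset.range M, f j = ∑ j ∈ Finset.range (max M N), f j := by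
    apply Finset.sum_subset (Finset.range_subset_range.mpr (le_max_left _ _))
    intro j _ hj
    rw [Finset.mem_range] at hj
    exact h j (by omega)
  have hN : ∑ j ∈ Finset.range N, f j = ∑ j ∈ Finset.range (max M N), f j := by
    apply Finset.sum_subset (Finset.range_subset_range.mpr (le_max_right _ _))
    intro j _ hj
    rw [Finset.mem_range] at hj
    exact h j (by omega)
  rw [hM, hN]

/-- Shifted re-indexing of a guarded range sum. -/
lemma sum_range_shift (F : ℕ → ℂ) (d n : ℕ) :
    ∑ j ∈ Finset.range (d + n + 1), (if d ≤ j then F j else 0)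
      = ∑ e ∈ Finset.range (n + 1), F (d + e) := by
  rw [← Finset.sum_filter]
  have h1 : (Finset.range (d + n + 1)).filter (fun j => d ≤ j) = Finset.Ico d (d + n + 1) := by
    ext j
    simp only [Finset.mem_filter, Finset.mem_range, Finset.mem_Ico]
    omega
  rw [h1, Finset.sum_Ico_eq_sum_range]
  have h2 : d + n + 1 - d = n + 1 := by omega
  rw [h2]

/-- Cauchy–Schwarz for weighted tsums. -/
lemma tsum_cs (h c : ℕ → ℝ) (hh : ∀ j, 0 ≤ h j) (hc : ∀ j, 0 ≤ c j)
    (hs : Summable h) (hs1 : Summable fun j => h j * c j)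
    (hs2 : Summable fun j => h j * c j ^ 2) :
    (∑' j, h j * c j) ^ 2 ≤ (∑' j, h j) * ∑' j, h j * c j ^ 2 := by
  set A := ∑' j, h j with hA
  set B := ∑' j, h j * c j ^ 2 with hB
  have hA0 : 0 ≤ A := tsum_nonneg fun j => hh j
  have hB0 : 0 ≤ B := tsum_nonneg fun j => mul_nonneg (hh j) (sq_nonneg _)
  have key : ∀ s : Finset ℕ, ∑ j ∈ s, h j * c j ≤ Real.sqrt (A * B) := by
    intro s
    have h1 : (∑ j ∈ s, h j * c j) ^ 2 ≤ (∑ j ∈ s, h j) * ∑ j ∈ s, h j * c j ^ 2 := by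
      have := Finset.sum_mul_sq_le_sq_mul_sq s (fun j => Real.sqrt (h j))
        (fun j => Real.sqrt (h j) * c j)
      have e1 : ∀ j, Real.sqrt (h j) * (Real.sqrt (h j) * c j) = h j * c j := by
        intro j
        rw [← mul_assoc, Real.mul_self_sqrt (hh j)]
      have e2 : ∀ j, Real.sqrt (h j) ^ 2 = h j := fun j => Real.sq_sqrt (hh j)
      have e3 : ∀ j, (Real.sqrt (h j) * c j) ^ 2 = h j * c j ^ 2 := by
        intro j
        rw [mul_pow, Real.sq_sqrt (hh j)]
      simp only [e1, e2, e3] at this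
      exact this
    have h2 : (∑ j ∈ s, h j) * ∑ j ∈ s, h j * c j ^ 2 ≤ A * B := by
      apply mul_le_mul
      · exact Summable.sum_le_tsum s (fun j _ => hh j) hs
      · exact Summable.sum_le_tsum s (fun j _ => mul_nonneg (hh j) (sq_nonneg _)) hs2
      · exact Finset.sum_nonneg fun j _ => mul_nonneg (hh j) (sq_nonneg _)
      · exact hA0
    have h3 : (∑ j ∈ s, h j * c j) ^ 2 ≤ A * B := le_trans h1 h2
    have h4 : 0 ≤ ∑ j ∈ s, h j * c j := Finset.sum_nonneg fun j _ => mul_nonneg (hh j) (hc j)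
    nlinarith [Real.sq_sqrt (mul_nonneg hA0 hB0), Real.sqrt_nonneg (A * B)]
  have h5 : ∑' j, h j * c j ≤ Real.sqrt (A * B) := Summable.tsum_le_of_sum_le hs1 key
  have h6 : 0 ≤ ∑' j, h j * c j := tsum_nonneg fun j => mul_nonneg (hh j) (hc j)
  nlinarith [Real.sq_sqrt (mul_nonneg hA0 hB0), Real.sqrt_nonneg (A * B)]

lemma two_toReal : ((2 : ℝ≥0∞)).toReal = 2 := by norm_num

lemma lp_norm_sq (y : lp (fun _ : ℕ => ℂ) 2) : ‖y‖ ^ 2 = ∑' i : ℕ, ‖y i‖ ^ 2 := by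
  have h := lp.norm_rpow_eq_tsum (p := 2) (by rw [two_toReal]; norm_num) y
  rw [two_toReal] at h
  calc ‖y‖ ^ 2 = ‖y‖ ^ (2 : ℝ) := by
        rw [show (2 : ℝ) = ((2 : ℕ) : ℝ) by norm_num, Real.rpow_natCast]
    _ = ∑' i : ℕ, ‖y i‖ ^ (2 : ℝ) := h
    _ = ∑' i : ℕ, ‖y i‖ ^ 2 := tsum_congr fun i => by
        rw [show (2 : ℝ) = ((2 : ℕ) : ℝ) by norm_num, Real.rpow_natCast]

lemma lp_summable_sq (y : lp (fun _ : ℕ => ℂ) 2) : Summable fun i : ℕ => ‖y i‖ ^ 2 := by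
  have h := (lp.memℓp y).summable (p := 2) (by rw [two_toReal]; norm_num)
  rw [two_toReal] at h
  refine h.congr fun i => ?_
  rw [show (2 : ℝ) = ((2 : ℕ) : ℝ) by norm_num, Real.rpow_natCast]

/-- Schur-type bound for a Hankel operator with absolutely summable symbol. -/
lemma hankel_norm_le (f : ℕ → ℂ) (hf : Summable fun m => ‖f m‖)
    (H : lp (fun _ : ℕ => ℂ) 2 →L[ℂ] lp (fun _ : ℕ => ℂ) 2)
    (hH : ∀ (x : lp (fun _ : ℕ => ℂ) 2) (i : ℕ), (H x) i = ∑' j : ℕ, f (i + j + 1) * x j) :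
    ‖H‖ ≤ ∑' m : ℕ, ‖f m‖ := by
  set C := ∑' m : ℕ, ‖f m‖ with hC
  have hC0 : 0 ≤ C := tsum_nonneg fun _ => norm_nonneg _
  apply ContinuousLinearMap.opNorm_le_bound _ hC0
  intro x
  have hxb : ∀ j : ℕ, ‖x j‖ ≤ ‖x‖ := fun j =>
    lp.norm_apply_le_norm (by norm_num : (2 : ℝ≥0∞) ≠ 0) x j
  have hx2 : Summable fun j : ℕ => ‖x j‖ ^ 2 := lp_summable_sq x
  have hrow_s : ∀ i : ℕ, Summable fun j : ℕ => ‖f (i + j + 1)‖ := by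
    intro i
    have h1 : Summable fun j : ℕ => ‖f (i + 1 + j)‖ :=
      hf.comp_injective fun x y hxy => by simpa using hxy
    exact h1.congr fun j => by rw [show i + 1 + j = i + j + 1 by omega]
  have hrow_le : ∀ i : ℕ, ∑' j : ℕ, ‖f (i + j + 1)‖ ≤ C := by
    intro i
    have hinj : Function.Injective (fun j : ℕ => i + j + 1) := fun x y hxy => by simpa using hxy
    have hGsupp : Function.support (fun m : ℕ => if i + 1 ≤ m then ‖f m‖ else 0)
        ⊆ Set.range (fun j : ℕ => i + j + 1) := by
      intro m hm
      by_cases h : i + 1 ≤ m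
      · exact ⟨m - (i + 1), by show i + (m - (i + 1)) + 1 = m; omega⟩
      · rw [Function.mem_support, if_neg h] at hm
        exact absurd rfl hm
    have heq := hinj.tsum_eq (f := fun m : ℕ => if i + 1 ≤ m then ‖f m‖ else 0) hGsupp
    have h2 : ∀ j : ℕ, (if i + 1 ≤ i + j + 1 then ‖f (i + j + 1)‖ else 0) = ‖f (i + j + 1)‖ :=
      fun j => if_pos (by omega)
    have hgsum : Summable (fun m : ℕ => if i + 1 ≤ m then ‖f m‖ else 0) := by
      refine Summable.of_nonneg_of_le (fun m => ?_) (fun m => ?_) hf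
      · by_cases h : i + 1 ≤ m
        · rw [if_pos h]; exact norm_nonneg _
        · rw [if_neg h]
      · by_cases h : i + 1 ≤ m
        · rw [if_pos h]
        · rw [if_neg h]; exact norm_nonneg _
    calc ∑' j : ℕ, ‖f (i + j + 1)‖
        = ∑' j : ℕ, (if i + 1 ≤ i + j + 1 then ‖f (i + j + 1)‖ else 0) :=
          (tsum_congr h2).symm
      _ = ∑' m : ℕ, (if i + 1 ≤ m then ‖f m‖ else 0) := heq
      _ ≤ C := by
          refine Summable.tsum_le_tsum (fun m => ?_) hgsum hf
          by_cases h : i + 1 ≤ m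
          · rw [if_pos h]
          · rw [if_neg h]; exact norm_nonneg _
  have hcol_sum_le : ∀ (s : Finset ℕ) (j : ℕ), (∑ i ∈ s, ‖f (i + j + 1)‖) ≤ C := by
    intro s j
    calc (∑ i ∈ s, ‖f (i + j + 1)‖)
        = ∑ m ∈ s.image (fun i : ℕ => i + j + 1), ‖f m‖ :=
          (Finset.sum_image (f := fun m : ℕ => ‖f m‖) (g := fun i : ℕ => i + j + 1)
            (fun p _ q _ h => by simpa using h)).symm
      _ ≤ C := Summable.sum_le_tsum _ (fun _ _ => norm_nonneg _) hf
  have hs1 : ∀ i : ℕ, Summable fun j : ℕ => ‖f (i + j + 1)‖ * ‖x j‖ := by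
    intro i
    refine Summable.of_nonneg_of_le (fun j => mul_nonneg (norm_nonneg _) (norm_nonneg _))
      (fun j => mul_le_mul_of_nonneg_left (hxb j) (norm_nonneg _)) ((hrow_s i).mul_right ‖x‖)
  have hs2 : ∀ i : ℕ, Summable fun j : ℕ => ‖f (i + j + 1)‖ * ‖x j‖ ^ 2 := by
    intro i
    refine Summable.of_nonneg_of_le (fun j => mul_nonneg (norm_nonneg _) (sq_nonneg _))
      (fun j => mul_le_mul_of_nonneg_left ?_ (norm_nonneg _)) ((hrow_s i).mul_right (‖x‖ ^ 2))
    exact pow_le_pow_left₀ (norm_nonneg _) (hxb j) 2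
  have key : ∀ i : ℕ, ‖(H x) i‖ ^ 2 ≤ C * ∑' j : ℕ, ‖f (i + j + 1)‖ * ‖x j‖ ^ 2 := by
    intro i
    have h1 : ‖(H x) i‖ ≤ ∑' j : ℕ, ‖f (i + j + 1)‖ * ‖x j‖ := by
      rw [hH x i]
      calc ‖∑' j : ℕ, f (i + j + 1) * x j‖ ≤ ∑' j : ℕ, ‖f (i + j + 1) * x j‖ := by
            apply norm_tsum_le_tsum_norm
            exact (hs1 i).congr fun j => (norm_mul _ _).symm
        _ = ∑' j : ℕ, ‖f (i + j + 1)‖ * ‖x j‖ := tsum_congr fun j => norm_mul _ _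
    have h2 := tsum_cs (fun j => ‖f (i + j + 1)‖) (fun j => ‖x j‖) (fun _ => norm_nonneg _)
      (fun _ => norm_nonneg _) (hrow_s i) (hs1 i) (hs2 i)
    calc ‖(H x) i‖ ^ 2 ≤ (∑' j : ℕ, ‖f (i + j + 1)‖ * ‖x j‖) ^ 2 :=
          pow_le_pow_left₀ (norm_nonneg _) h1 2
      _ ≤ (∑' j : ℕ, ‖f (i + j + 1)‖) * ∑' j : ℕ, ‖f (i + j + 1)‖ * ‖x j‖ ^ 2 := h2
      _ ≤ C * ∑' j : ℕ, ‖f (i + j + 1)‖ * ‖x j‖ ^ 2 := by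
          refine mul_le_mul_of_nonneg_right (hrow_le i) ?_
          exact tsum_nonneg fun j => mul_nonneg (norm_nonneg _) (sq_nonneg _)
  have total : ∀ s : Finset ℕ, ∑ i ∈ s, ‖(H x) i‖ ^ 2 ≤ C * (C * ‖x‖ ^ 2) := by
    intro s
    have hstep : ∑ i ∈ s, ∑' j : ℕ, ‖f (i + j + 1)‖ * ‖x j‖ ^ 2 ≤ C * ‖x‖ ^ 2 := by
      have hswap : ∑ i ∈ s, ∑' j : ℕ, ‖f (i + j + 1)‖ * ‖x j‖ ^ 2
          = ∑' j : ℕ, ∑ i ∈ s, ‖f (i + j + 1)‖ * ‖x j‖ ^ 2 :=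
        (Summable.tsum_finsetSum fun i _ => hs2 i).symm
      rw [hswap]
      calc ∑' j : ℕ, ∑ i ∈ s, ‖f (i + j + 1)‖ * ‖x j‖ ^ 2
          = ∑' j : ℕ, (∑ i ∈ s, ‖f (i + j + 1)‖) * ‖x j‖ ^ 2 :=
            tsum_congr fun j => by rw [Finset.sum_mul]
        _ ≤ ∑' j : ℕ, C * ‖x j‖ ^ 2 := by
            refine Summable.tsum_le_tsum (fun j => mul_le_mul_of_nonneg_right (hcol_sum_le s j)
              (sq_nonneg _)) ?_ (hx2.mul_left C)
            refine Summable.of_nonneg_of_le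
              (fun j => mul_nonneg (Finset.sum_nonneg fun _ _ => norm_nonneg _) (sq_nonneg _))
              (fun j => mul_le_mul_of_nonneg_right (hcol_sum_le s j) (sq_nonneg _))
              (hx2.mul_left C)
        _ = C * ∑' j : ℕ, ‖x j‖ ^ 2 := tsum_mul_left
        _ = C * ‖x‖ ^ 2 := by rw [← lp_norm_sq x]
    calc ∑ i ∈ s, ‖(H x) i‖ ^ 2
        ≤ ∑ i ∈ s, C * ∑' j : ℕ, ‖f (i + j + 1)‖ * ‖x j‖ ^ 2 :=
          Finset.sum_le_sum fun i _ => key i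
      _ = C * ∑ i ∈ s, ∑' j : ℕ, ‖f (i + j + 1)‖ * ‖x j‖ ^ 2 := by rw [Finset.mul_sum]
      _ ≤ C * (C * ‖x‖ ^ 2) := mul_le_mul_of_nonneg_left hstep hC0
  have final2 : ‖H x‖ ^ 2 ≤ (C * ‖x‖) ^ 2 := by
    rw [lp_norm_sq (H x)]
    calc ∑' i : ℕ, ‖(H x) i‖ ^ 2 ≤ C * (C * ‖x‖ ^ 2) :=
          Summable.tsum_le_of_sum_le (lp_summable_sq (H x)) total
      _ = (C * ‖x‖) ^ 2 := by ring
  nlinarith [norm_nonneg (H x), mul_nonneg hC0 (norm_nonneg x)]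

end ToepAux

set_option maxHeartbeats 1600000 in
/-- Wiener–Hopf inversion of a banded Toeplitz operator. -/
theorem toeplitz_inverse_formula
    (nm np : ℕ) (a : ℤ → ℂ)
    (hsupp : ∀ k : ℤ, (k < -(nm : ℤ) ∨ (np : ℤ) < k) → a k = 0)
    (u l : ℕ → ℂ)
    (hu_supp : ∀ i : ℕ, np < i → u i = 0) (hl_supp : ∀ i : ℕ, nm < i → l i = 0)
    (hu_nv : ∀ z : ℂ, ‖z‖ ≤ 1 → ∑ i ∈ Finset.range (np + 1), u i * z ^ i ≠ 0)
    (hl_nv : ∀ z : ℂ, ‖z‖ ≤ 1 → ∑ i ∈ Finset.range (nm + 1), l i * z ^ i ≠ 0)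
    (hfact : ∀ k : ℤ, a k =
      ∑ i ∈ Finset.range (np + 1), ∑ j ∈ Finset.range (nm + 1),
        if (i : ℤ) - (j : ℤ) = k then u i * l j else 0)
    (v w : ℕ → ℂ)
    (hv_sum : Summable fun k : ℕ => ‖v k‖) (hw_sum : Summable fun k : ℕ => ‖w k‖)
    (huv : ∀ n : ℕ, ∑ i ∈ Finset.range (n + 1), u i * v (n - i) = if n = 0 then 1 else 0)
    (hlw : ∀ n : ℕ, ∑ i ∈ Finset.range (n + 1), l i * w (n - i) = if n = 0 then 1 else 0)
    (b : ℤ → ℂ)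
    (hb : ∀ k : ℤ, b k = ∑' p : ℕ × ℕ,
      if (p.1 : ℤ) - (p.2 : ℤ) = k then v p.1 * w p.2 else 0)
    (Ta Tb Hw Hv : lp (fun _ : ℕ => ℂ) 2 →L[ℂ] lp (fun _ : ℕ => ℂ) 2)
    (hTa : IsToeplitzOp Ta a) (hTb : IsToeplitzOp Tb b)
    (hHw : IsHankelOpPS Hw w) (hHv : IsHankelOpPS Hv v) :
    IsUnit Ta ∧
    Ta ∘L (Tb - Hw ∘L Hv) = 1 ∧ (Tb - Hw ∘L Hv) ∘L Ta = 1 ∧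
    ‖Hw ∘L Hv‖ ≤ (∑' j : ℕ, ‖w j‖) * (∑' j : ℕ, ‖v j‖) := by
  classical
  haveI : Fact ((1 : ℝ≥0∞) ≤ 2) := ⟨one_le_two⟩
  set Vb := ∑' j : ℕ, ‖v j‖ with hVbdef
  set Wb := ∑' j : ℕ, ‖w j‖ with hWbdef
  have hVb0 : 0 ≤ Vb := tsum_nonneg fun _ => norm_nonneg _
  have hWb0 : 0 ≤ Wb := tsum_nonneg fun _ => norm_nonneg _
  have hv_bdd : ∀ t : ℤ, ‖zext v t‖ ≤ Vb := fun t => zext_norm_le hv_sum t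
  have hw_bdd : ∀ t : ℤ, ‖zext w t‖ ≤ Wb := fun t => zext_norm_le hw_sum t
  have hv_bddn : ∀ m : ℕ, ‖v m‖ ≤ Vb := fun m => Summable.le_tsum hv_sum m (fun j _ => norm_nonneg _)
  have hw_bddn : ∀ m : ℕ, ‖w m‖ ≤ Wb := fun m => Summable.le_tsum hw_sum m (fun j _ => norm_nonneg _)
  -- two one-sided forms of the symbol a
  have ha1 : ∀ k : ℤ, a k = ∑ p ∈ Finset.range (np + 1), u p * zext l ((p : ℤ) - k) := by
    intro k
    rw [hfact k]
    refine Finset.sum_congr rfl fun p _ => ?_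
    have h1 : ∀ j ∈ Finset.range (nm + 1),
        (if (p : ℤ) - (j : ℤ) = k then u p * l j else 0)
          = u p * (if (j : ℤ) = (p : ℤ) - k then l j else 0) := by
      intro j _
      by_cases h : (p : ℤ) - (j : ℤ) = k
      · rw [if_pos h, if_pos (by omega)]
      · rw [if_neg h, if_neg (by omega), mul_zero]
    rw [Finset.sum_congr rfl h1, ← Finset.mul_sum, sum_ite_coe nm l hl_supp]
  have ha2 : ∀ k : ℤ, a k = ∑ q ∈ Finset.range (nm + 1), zext u (k + (q : ℤ)) * l q := by
    intro k
    rw [hfact k, Finset.sum_comm]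
    refine Finset.sum_congr rfl fun q _ => ?_
    have h1 : ∀ p ∈ Finset.range (np + 1),
        (if (p : ℤ) - (q : ℤ) = k then u p * l q else 0)
          = (if (p : ℤ) = k + (q : ℤ) then u p else 0) * l q := by
      intro p _
      by_cases h : (p : ℤ) - (q : ℤ) = k
      · rw [if_pos h, if_pos (by omega)]
      · rw [if_neg h, if_neg (by omega), zero_mul]
    rw [Finset.sum_congr rfl h1, ← Finset.sum_mul, sum_ite_coe np u hu_supp]
  -- bounds for u, l, a
  have hUb0 : 0 ≤ ∑ p ∈ Finset.range (np + 1), ‖u p‖ :=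
    Finset.sum_nonneg fun _ _ => norm_nonneg _
  have hLb0 : 0 ≤ ∑ q ∈ Finset.range (nm + 1), ‖l q‖ :=
    Finset.sum_nonneg fun _ _ => norm_nonneg _
  have hl_bdd : ∀ t : ℤ, ‖zext l t‖ ≤ ∑ q ∈ Finset.range (nm + 1), ‖l q‖ := by
    intro t
    by_cases h : 0 ≤ t
    · rw [zext_nonneg _ h]
      by_cases h2 : t.toNat ≤ nm
      · exact Finset.single_le_sum (fun j _ => norm_nonneg _) (Finset.mem_range.mpr (by omega))
      · rw [hl_supp _ (by omega), norm_zero]; exact hLb0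
    · rw [zext_neg _ (by omega), norm_zero]; exact hLb0
  have hu_bdd : ∀ t : ℤ, ‖zext u t‖ ≤ ∑ p ∈ Finset.range (np + 1), ‖u p‖ := by
    intro t
    by_cases h : 0 ≤ t
    · rw [zext_nonneg _ h]
      by_cases h2 : t.toNat ≤ np
      · exact Finset.single_le_sum (fun j _ => norm_nonneg _) (Finset.mem_range.mpr (by omega))
      · rw [hu_supp _ (by omega), norm_zero]; exact hUb0
    · rw [zext_neg _ (by omega), norm_zero]; exact hUb0
  have ha_bdd : ∀ k : ℤ,
      ‖a k‖ ≤ (∑ p ∈ Finset.range (np + 1), ‖u p‖) * ∑ q ∈ Finset.range (nm + 1), ‖l q‖ := by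
    intro k
    rw [ha1 k]
    calc ‖∑ p ∈ Finset.range (np + 1), u p * zext l ((p : ℤ) - k)‖
        ≤ ∑ p ∈ Finset.range (np + 1), ‖u p * zext l ((p : ℤ) - k)‖ := norm_sum_le _ _
      _ ≤ ∑ p ∈ Finset.range (np + 1), ‖u p‖ * ∑ q ∈ Finset.range (nm + 1), ‖l q‖ := by
          refine Finset.sum_le_sum fun p _ => ?_
          rw [norm_mul]
          exact mul_le_mul_of_nonneg_left (hl_bdd _) (norm_nonneg _)
      _ = (∑ p ∈ Finset.range (np + 1), ‖u p‖) * ∑ q ∈ Finset.range (nm + 1), ‖l q‖ := by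
          rw [Finset.sum_mul]
  set Ca := (∑ p ∈ Finset.range (np + 1), ‖u p‖) * ∑ q ∈ Finset.range (nm + 1), ‖l q‖
    with hCadef
  have hCa0 : 0 ≤ Ca := mul_nonneg hUb0 hLb0
  -- extended convolution identities
  have convW : ∀ c : ℤ, ∑' d : ℕ, zext l (c - (d : ℤ)) * w d = if c = 0 then 1 else 0 :=
    conv_delta l w hlw
  have convV : ∀ c : ℤ, ∑' d : ℕ, zext u (c - (d : ℤ)) * v d = if c = 0 then 1 else 0 :=
    conv_delta u v huv
  -- the two iterated-sum forms of b
  have hvw_prod : Summable (fun q : ℕ × ℕ => ‖v q.1‖ * ‖w q.2‖) :=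
    Summable.mul_of_nonneg hv_sum hw_sum (fun n => norm_nonneg _) (fun n => norm_nonneg _)
  have hbsum : ∀ k : ℤ, Summable (fun p : ℕ × ℕ =>
      if (p.1 : ℤ) - (p.2 : ℤ) = k then v p.1 * w p.2 else 0) := by
    intro k
    refine Summable.of_norm_bounded hvw_prod fun p => ?_
    by_cases h : (p.1 : ℤ) - (p.2 : ℤ) = k
    · rw [if_pos h, norm_mul]
    · rw [if_neg h, norm_zero]
      exact mul_nonneg (norm_nonneg _) (norm_nonneg _)
  have hb1 : ∀ k : ℤ, b k = ∑' d : ℕ, zext v (k + (d : ℤ)) * w d := by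
    intro k
    have hrows : ∀ c : ℕ, Summable fun d : ℕ =>
        if (c : ℤ) - (d : ℤ) = k then v c * w d else 0 :=
      fun c => (hbsum k).prod_factor c
    have hcols : ∀ d : ℕ, Summable fun c : ℕ =>
        if (c : ℤ) - (d : ℤ) = k then v c * w d else 0 := by
      intro d
      refine Summable.of_norm_bounded (hv_sum.mul_right ‖w d‖) fun c => ?_
      by_cases h : (c : ℤ) - (d : ℤ) = k
      · rw [if_pos h, norm_mul]
      · rw [if_neg h, norm_zero]
        exact mul_nonneg (norm_nonneg _) (norm_nonneg _)
    have hcomm := (Summable.tsum_comm' (f := fun (c d : ℕ) =>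
      if (c : ℤ) - (d : ℤ) = k then v c * w d else 0) (hbsum k) hrows hcols).symm
    rw [hb k, Summable.tsum_prod' (hbsum k) hrows, hcomm]
    refine tsum_congr fun d => ?_
    by_cases h : 0 ≤ k + (d : ℤ)
    · rw [tsum_eq_single (k + (d : ℤ)).toNat (fun c hc => by rw [if_neg (by omega)]),
        if_pos (by omega), zext_nonneg _ h]
    · rw [zext_neg _ (by omega), zero_mul]
      have h2 : ∀ c : ℕ, (if (c : ℤ) - (d : ℤ) = k then v c * w d else 0) = 0 := fun c => by
        rw [if_neg (by omega)]
      rw [tsum_congr h2, tsum_zero]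
  have hb2 : ∀ k : ℤ, b k = ∑' c : ℕ, v c * zext w ((c : ℤ) - k) := by
    intro k
    rw [hb k, Summable.tsum_prod' (hbsum k) (fun c => (hbsum k).prod_factor c)]
    refine tsum_congr fun c => ?_
    by_cases h : 0 ≤ (c : ℤ) - k
    · rw [tsum_eq_single ((c : ℤ) - k).toNat (fun d hd => by rw [if_neg (by omega)]),
        if_pos (by omega), zext_nonneg _ h]
    · rw [zext_neg _ (by omega), mul_zero]
      have h2 : ∀ d : ℕ, (if (c : ℤ) - (d : ℤ) = k then v c * w d else 0) = 0 := fun d => by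
        rw [if_neg (by omega)]
      rw [tsum_congr h2, tsum_zero]
  -- ====================== the key right-inverse kernel identity =====================
  have goalR : ∀ n i : ℕ,
      (∑' j : ℕ, a ((j : ℤ) - (i : ℤ)) *
        (b ((n : ℤ) - (j : ℤ)) - ∑' k : ℕ, w (j + k + 1) * v (k + n + 1)))
        = if i = n then 1 else 0 := by
    intro n i
    have step1 : ∀ j : ℕ,
        (b ((n : ℤ) - (j : ℤ)) - ∑' k : ℕ, w (j + k + 1) * v (k + n + 1))
          = ∑' d : ℕ, (if d ≤ j then w d * zext v ((n : ℤ) - (j : ℤ) + (d : ℤ)) else 0) := by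
      intro j
      have hf : b ((n : ℤ) - (j : ℤ))
          = ∑' d : ℕ, w d * zext v ((n : ℤ) - (j : ℤ) + (d : ℤ)) := by
        rw [hb1 ((n : ℤ) - (j : ℤ))]
        exact tsum_congr fun d => mul_comm _ _
      have hsf : Summable fun d : ℕ => w d * zext v ((n : ℤ) - (j : ℤ) + (d : ℤ)) :=
        summable_l1_mul_bdd hw_sum (fun d => hv_bdd _)
      have hinj : Function.Injective (fun k : ℕ => j + 1 + k) := fun x y hxy => by simpa using hxy
      have hGsupp : Function.support
          (fun d : ℕ => if j + 1 ≤ d then w d * zext v ((n : ℤ) - (j : ℤ) + (d : ℤ)) else 0)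
            ⊆ Set.range (fun k : ℕ => j + 1 + k) := by
        intro d hd
        by_cases h : j + 1 ≤ d
        · exact ⟨d - (j + 1), by show j + 1 + (d - (j + 1)) = d; omega⟩
        · rw [Function.mem_support, if_neg h] at hd
          exact absurd rfl hd
      have hg := hinj.tsum_eq hGsupp
      have hg2 : ∀ k : ℕ,
          (if j + 1 ≤ j + 1 + k then w (j + 1 + k)
              * zext v ((n : ℤ) - (j : ℤ) + ((j + 1 + k : ℕ) : ℤ)) else 0)
            = w (j + k + 1) * v (k + n + 1) := by
        intro k
        rw [if_pos (by omega)]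
        have h3 : ((n : ℤ) - (j : ℤ) + ((j + 1 + k : ℕ) : ℤ)) = ((k + n + 1 : ℕ) : ℤ) := by
          push_cast; ring
        rw [h3, zext_coe]
        congr 2
        omega
      have hG : (∑' k : ℕ, w (j + k + 1) * v (k + n + 1))
          = ∑' d : ℕ, (if j + 1 ≤ d then w d * zext v ((n : ℤ) - (j : ℤ) + (d : ℤ)) else 0) := by
        rw [← hg]
        exact (tsum_congr hg2).symm
      have hsG : Summable (fun d : ℕ =>
          if j + 1 ≤ d then w d * zext v ((n : ℤ) - (j : ℤ) + (d : ℤ)) else 0) := by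
        refine Summable.of_norm_bounded (hw_sum.mul_right Vb) fun d => ?_
        by_cases h : j + 1 ≤ d
        · rw [if_pos h, norm_mul]
          exact mul_le_mul_of_nonneg_left (hv_bdd _) (norm_nonneg _)
        · rw [if_neg h, norm_zero]
          exact mul_nonneg (norm_nonneg _) hVb0
      rw [hf, hG, ← Summable.tsum_sub hsf hsG]
      refine tsum_congr fun d => ?_
      by_cases h : j + 1 ≤ d
      · rw [if_pos h, if_neg (by omega), sub_self]
      · rw [if_neg h, if_pos (by omega), sub_zero]
    have houter : (∑' j : ℕ, a ((j : ℤ) - (i : ℤ)) *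
          (b ((n : ℤ) - (j : ℤ)) - ∑' k : ℕ, w (j + k + 1) * v (k + n + 1)))
        = ∑ j ∈ Finset.range (i + np + 1), ∑' d : ℕ,
            a ((j : ℤ) - (i : ℤ)) *
              (if d ≤ j then w d * zext v ((n : ℤ) - (j : ℤ) + (d : ℤ)) else 0) := by
      rw [tsum_eq_sum (s := Finset.range (i + np + 1))
        (fun j hj => by
          rw [Finset.mem_range] at hj
          rw [hsupp _ (Or.inr (by omega)), zero_mul])]
      exact Finset.sum_congr rfl fun j _ => by rw [step1 j, ← tsum_mul_left]
    have hsummand : ∀ j : ℕ, Summable (fun d : ℕ =>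
        a ((j : ℤ) - (i : ℤ)) *
          (if d ≤ j then w d * zext v ((n : ℤ) - (j : ℤ) + (d : ℤ)) else 0)) := by
      intro j
      refine Summable.of_norm_bounded
        ((hw_sum.mul_right Vb).mul_left ‖a ((j : ℤ) - (i : ℤ))‖) fun d => ?_
      rw [norm_mul]
      refine mul_le_mul_of_nonneg_left ?_ (norm_nonneg _)
      by_cases h : d ≤ j
      · rw [if_pos h, norm_mul]
        exact mul_le_mul_of_nonneg_left (hv_bdd _) (norm_nonneg _)
      · rw [if_neg h, norm_zero]
        exact mul_nonneg (norm_nonneg _) hVb0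
    have hswap : (∑ j ∈ Finset.range (i + np + 1), ∑' d : ℕ,
          a ((j : ℤ) - (i : ℤ)) *
            (if d ≤ j then w d * zext v ((n : ℤ) - (j : ℤ) + (d : ℤ)) else 0))
        = ∑' d : ℕ, ∑ j ∈ Finset.range (i + np + 1),
            a ((j : ℤ) - (i : ℤ)) *
              (if d ≤ j then w d * zext v ((n : ℤ) - (j : ℤ) + (d : ℤ)) else 0) :=
      (Summable.tsum_finsetSum fun j _ => hsummand j).symm
    have hPd : ∀ d : ℕ, (∑ j ∈ Finset.range (i + np + 1),
          a ((j : ℤ) - (i : ℤ)) *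
            (if d ≤ j then w d * zext v ((n : ℤ) - (j : ℤ) + (d : ℤ)) else 0))
        = ∑ e ∈ Finset.range (n + 1),
            w d * (a ((d : ℤ) + (e : ℤ) - (i : ℤ)) * v (n - e)) := by
      intro d
      have h1 : ∀ j : ℕ, a ((j : ℤ) - (i : ℤ)) *
            (if d ≤ j then w d * zext v ((n : ℤ) - (j : ℤ) + (d : ℤ)) else 0)
          = if d ≤ j then
              a ((j : ℤ) - (i : ℤ)) * (w d * zext v ((n : ℤ) - (j : ℤ) + (d : ℤ))) else 0 := by
        intro j
        by_cases h : d ≤ j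
        · rw [if_pos h, if_pos h]
        · rw [if_neg h, if_neg h, mul_zero]
      simp only [h1]
      rw [sum_range_congr_zero _ (i + np + 1) (d + n + 1)
        (fun j hj => by
          by_cases h : d ≤ j
          · rw [if_pos h]
            rcases le_or_gt (i + np + 1) j with h2 | h2
            · rw [hsupp _ (Or.inr (by omega)), zero_mul]
            · have h3 : (n : ℤ) - (j : ℤ) + (d : ℤ) < 0 := by omega
              rw [zext_neg _ h3, mul_zero, mul_zero]
          · rw [if_neg h])]
      rw [sum_range_shift
        (fun j => a ((j : ℤ) - (i : ℤ)) * (w d * zext v ((n : ℤ) - (j : ℤ) + (d : ℤ)))) d n]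
      refine Finset.sum_congr rfl fun e he => ?_
      rw [Finset.mem_range] at he
      have e1 : ((d + e : ℕ) : ℤ) - (i : ℤ) = (d : ℤ) + (e : ℤ) - (i : ℤ) := by
        push_cast; ring
      have e2 : ((n : ℤ) - ((d + e : ℕ) : ℤ) + (d : ℤ)) = (n : ℤ) - (e : ℤ) := by
        push_cast; ring
      rw [e1, e2, zext_nonneg _ (by omega : (0:ℤ) ≤ (n : ℤ) - (e : ℤ))]
      have e3 : ((n : ℤ) - (e : ℤ)).toNat = n - e := by omega
      rw [e3]
      ring
    have hswap2 : (∑' d : ℕ, ∑ e ∈ Finset.range (n + 1),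
          w d * (a ((d : ℤ) + (e : ℤ) - (i : ℤ)) * v (n - e)))
        = ∑ e ∈ Finset.range (n + 1), ∑' d : ℕ,
            w d * (a ((d : ℤ) + (e : ℤ) - (i : ℤ)) * v (n - e)) := by
      refine Summable.tsum_finsetSum fun e _ => ?_
      refine summable_l1_mul_bdd hw_sum (C := Ca * Vb) fun d => ?_
      rw [norm_mul]
      exact mul_le_mul (ha_bdd _) (hv_bddn _) (norm_nonneg _) hCa0
    have hJ : ∀ e : ℕ, (∑' d : ℕ, w d * (a ((d : ℤ) + (e : ℤ) - (i : ℤ)) * v (n - e)))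
        = zext u ((e : ℤ) - (i : ℤ)) * v (n - e) := by
      intro e
      have hassoc : ∀ d : ℕ, w d * (a ((d : ℤ) + (e : ℤ) - (i : ℤ)) * v (n - e))
          = (w d * a ((d : ℤ) + (e : ℤ) - (i : ℤ))) * v (n - e) := fun d => by ring
      rw [tsum_congr hassoc, tsum_mul_right]
      congr 1
      have h2 : ∀ d : ℕ, w d * a ((d : ℤ) + (e : ℤ) - (i : ℤ))
          = ∑ p ∈ Finset.range (np + 1),
              u p * (zext l (((p : ℤ) + (i : ℤ) - (e : ℤ)) - (d : ℤ)) * w d) := by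
        intro d
        rw [ha1 ((d : ℤ) + (e : ℤ) - (i : ℤ)), Finset.mul_sum]
        refine Finset.sum_congr rfl fun p _ => ?_
        have e1 : (p : ℤ) - ((d : ℤ) + (e : ℤ) - (i : ℤ))
            = ((p : ℤ) + (i : ℤ) - (e : ℤ)) - (d : ℤ) := by ring
        rw [e1]
        ring
      rw [tsum_congr h2]
      rw [Summable.tsum_finsetSum (fun p _ =>
        ((summable_bdd_mul_l1 hw_sum (C := ∑ q ∈ Finset.range (nm + 1), ‖l q‖)
          fun d => hl_bdd _).mul_left (u p)))]
      have h3 : ∀ p ∈ Finset.range (np + 1),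
          (∑' d : ℕ, u p * (zext l (((p : ℤ) + (i : ℤ) - (e : ℤ)) - (d : ℤ)) * w d))
            = if (p : ℤ) = (e : ℤ) - (i : ℤ) then u p else 0 := by
        intro p _
        rw [tsum_mul_left, convW ((p : ℤ) + (i : ℤ) - (e : ℤ))]
        by_cases h : (p : ℤ) + (i : ℤ) - (e : ℤ) = 0
        · rw [if_pos h, if_pos (by omega), mul_one]
        · rw [if_neg h, if_neg (by omega), mul_zero]
      rw [Finset.sum_congr rfl h3, sum_ite_coe np u hu_supp]
    have hfinal : (∑ e ∈ Finset.range (n + 1), zext u ((e : ℤ) - (i : ℤ)) * v (n - e))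
        = if i = n then 1 else 0 := by
      by_cases hin : i ≤ n
      · have h1 : ∀ e ∈ Finset.range (n + 1), zext u ((e : ℤ) - (i : ℤ)) * v (n - e)
            = if i ≤ e then u (e - i) * v (n - e) else 0 := by
          intro e _
          by_cases h : i ≤ e
          · rw [if_pos h, zext_nonneg _ (by omega : (0:ℤ) ≤ (e : ℤ) - (i : ℤ))]
            have e1 : ((e : ℤ) - (i : ℤ)).toNat = e - i := by omega
            rw [e1]
          · rw [if_neg h, zext_neg _ (by omega), zero_mul]
        rw [Finset.sum_congr rfl h1, ← Finset.sum_filter]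
        have h2 : (Finset.range (n + 1)).filter (fun e => i ≤ e) = Finset.Ico i (n + 1) := by
          ext e
          simp only [Finset.mem_filter, Finset.mem_range, Finset.mem_Ico]
          omega
        rw [h2, Finset.sum_Ico_eq_sum_range]
        have h3 : n + 1 - i = (n - i) + 1 := by omega
        rw [h3]
        have h4 : ∀ f ∈ Finset.range ((n - i) + 1), u (i + f - i) * v (n - (i + f))
            = u f * v ((n - i) - f) := by
          intro f hf
          rw [Finset.mem_range] at hf
          have e1 : i + f - i = f := by omega
          have e2 : n - (i + f) = (n - i) - f := by omega
          rw [e1, e2]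
        rw [Finset.sum_congr rfl h4, huv (n - i)]
        by_cases h : i = n
        · rw [if_pos (by omega : n - i = 0), if_pos h]
        · rw [if_neg (by omega : ¬ n - i = 0), if_neg h]
      · have h1 : ∀ e ∈ Finset.range (n + 1), zext u ((e : ℤ) - (i : ℤ)) * v (n - e) = 0 := by
          intro e he
          rw [Finset.mem_range] at he
          rw [zext_neg _ (by omega), zero_mul]
        rw [Finset.sum_eq_zero h1, if_neg (by omega)]
    rw [houter, hswap, tsum_congr hPd, hswap2, Finset.sum_congr rfl fun e _ => hJ e]
    exact hfinal
  -- ====================== the key left-inverse kernel identity ======================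
  have goalL : ∀ n i : ℕ,
      ((∑' j : ℕ, b ((j : ℤ) - (i : ℤ)) * a ((n : ℤ) - (j : ℤ)))
        - ∑' j : ℕ, w (i + j + 1) * ∑' k : ℕ, v (j + k + 1) * a ((n : ℤ) - (k : ℤ)))
        = if i = n then 1 else 0 := by
    intro n i
    have hG1sum : ∀ j ∈ Finset.range (n + nm + 1), Summable (fun c : ℕ =>
        v c * (zext w ((c : ℤ) + (i : ℤ) - (j : ℤ)) * a ((n : ℤ) - (j : ℤ)))) := by
      intro j _
      refine summable_l1_mul_bdd hv_sum (C := Wb * Ca) fun c => ?_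
      rw [norm_mul]
      exact mul_le_mul (hw_bdd _) (ha_bdd _) (norm_nonneg _) hWb0
    have hG2sum : ∀ j ∈ Finset.range (n + nm + 1), Summable (fun c : ℕ =>
        if j + 1 ≤ c then
          v c * (zext w ((c : ℤ) + (i : ℤ) - (j : ℤ)) * a ((n : ℤ) - (j : ℤ))) else 0) := by
      intro j _
      refine Summable.of_norm_bounded (hv_sum.mul_right (Wb * Ca)) fun c => ?_
      by_cases h : j + 1 ≤ c
      · rw [if_pos h, norm_mul]
        refine mul_le_mul_of_nonneg_left ?_ (norm_nonneg _)
        rw [norm_mul]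
        exact mul_le_mul (hw_bdd _) (ha_bdd _) (norm_nonneg _) hWb0
      · rw [if_neg h, norm_zero]
        exact mul_nonneg (norm_nonneg _) (mul_nonneg hWb0 hCa0)
    have hT1 : (∑' j : ℕ, b ((j : ℤ) - (i : ℤ)) * a ((n : ℤ) - (j : ℤ)))
        = ∑' c : ℕ, ∑ j ∈ Finset.range (n + nm + 1),
            v c * (zext w ((c : ℤ) + (i : ℤ) - (j : ℤ)) * a ((n : ℤ) - (j : ℤ))) := by
      rw [tsum_eq_sum (s := Finset.range (n + nm + 1))
        (fun j hj => by
          rw [Finset.mem_range] at hj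
          rw [hsupp _ (Or.inl (by omega)), mul_zero])]
      rw [Summable.tsum_finsetSum hG1sum]
      refine Finset.sum_congr rfl fun j _ => ?_
      rw [hb2 ((j : ℤ) - (i : ℤ)), ← tsum_mul_right]
      refine tsum_congr fun c => ?_
      have e1 : (c : ℤ) - ((j : ℤ) - (i : ℤ)) = (c : ℤ) + (i : ℤ) - (j : ℤ) := by ring
      rw [e1]
      ring
    have hQ : ∀ j : ℕ, (∑' k : ℕ, v (j + k + 1) * a ((n : ℤ) - (k : ℤ)))
        = ∑ k ∈ Finset.range (n + nm + 1), v (j + k + 1) * a ((n : ℤ) - (k : ℤ)) := by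
      intro j
      apply tsum_eq_sum
      intro k hk
      rw [Finset.mem_range] at hk
      rw [hsupp _ (Or.inl (by omega)), mul_zero]
    have hT2 : (∑' j : ℕ, w (i + j + 1) * ∑' k : ℕ, v (j + k + 1) * a ((n : ℤ) - (k : ℤ)))
        = ∑' c : ℕ, ∑ k ∈ Finset.range (n + nm + 1),
            (if k + 1 ≤ c then
              v c * (zext w ((c : ℤ) + (i : ℤ) - (k : ℤ)) * a ((n : ℤ) - (k : ℤ))) else 0) := by
      have hsum_jk : ∀ k : ℕ, Summable (fun j : ℕ =>
          w (i + j + 1) * (v (j + k + 1) * a ((n : ℤ) - (k : ℤ)))) := by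
        intro k
        have hws : Summable fun j : ℕ => ‖w (i + j + 1)‖ := by
          have h1 : Summable fun j : ℕ => ‖w (i + 1 + j)‖ :=
            hw_sum.comp_injective fun x y hxy => by simpa using hxy
          exact h1.congr fun j => by rw [show i + 1 + j = i + j + 1 by omega]
        refine Summable.of_norm_bounded
          (hws.mul_right (Vb * ‖a ((n : ℤ) - (k : ℤ))‖)) fun j => ?_
        rw [norm_mul, norm_mul]
        refine mul_le_mul_of_nonneg_left ?_ (norm_nonneg _)
        exact mul_le_mul_of_nonneg_right (hv_bddn _) (norm_nonneg _)
      have h1 : (∑' j : ℕ, w (i + j + 1) * ∑' k : ℕ, v (j + k + 1) * a ((n : ℤ) - (k : ℤ)))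
          = ∑' j : ℕ, ∑ k ∈ Finset.range (n + nm + 1),
              w (i + j + 1) * (v (j + k + 1) * a ((n : ℤ) - (k : ℤ))) := by
        refine tsum_congr fun j => ?_
        rw [hQ j, Finset.mul_sum]
      rw [h1, Summable.tsum_finsetSum fun k _ => hsum_jk k]
      have h2 : ∀ k ∈ Finset.range (n + nm + 1),
          (∑' j : ℕ, w (i + j + 1) * (v (j + k + 1) * a ((n : ℤ) - (k : ℤ))))
            = ∑' c : ℕ, (if k + 1 ≤ c then
                v c * (zext w ((c : ℤ) + (i : ℤ) - (k : ℤ)) * a ((n : ℤ) - (k : ℤ))) else 0) := by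
        intro k _
        have hinj : Function.Injective (fun j : ℕ => k + 1 + j) := fun x y hxy => by simpa using hxy
        have hGsupp : Function.support (fun c : ℕ => if k + 1 ≤ c then
              v c * (zext w ((c : ℤ) + (i : ℤ) - (k : ℤ)) * a ((n : ℤ) - (k : ℤ))) else 0)
            ⊆ Set.range (fun j : ℕ => k + 1 + j) := by
          intro c hc
          by_cases h : k + 1 ≤ c
          · exact ⟨c - (k + 1), by show k + 1 + (c - (k + 1)) = c; omega⟩
          · rw [Function.mem_support, if_neg h] at hc
            exact absurd rfl hc
        rw [← hinj.tsum_eq hGsupp]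
        refine tsum_congr fun j => ?_
        rw [if_pos (by omega)]
        have e1 : (((k + 1 + j : ℕ) : ℤ) + (i : ℤ) - (k : ℤ)) = ((i + j + 1 : ℕ) : ℤ) := by
          push_cast; ring
        rw [e1, zext_coe]
        have e2 : k + 1 + j = j + k + 1 := by omega
        rw [e2]
        ring
      rw [Finset.sum_congr rfl h2, ← Summable.tsum_finsetSum hG2sum]
    have hcomb : ((∑' j : ℕ, b ((j : ℤ) - (i : ℤ)) * a ((n : ℤ) - (j : ℤ)))
          - ∑' j : ℕ, w (i + j + 1) * ∑' k : ℕ, v (j + k + 1) * a ((n : ℤ) - (k : ℤ)))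
        = ∑' c : ℕ, ∑ j ∈ Finset.range (n + nm + 1),
            (if c ≤ j then
              v c * (zext w ((c : ℤ) + (i : ℤ) - (j : ℤ)) * a ((n : ℤ) - (j : ℤ))) else 0) := by
      rw [hT1, hT2, ← Summable.tsum_sub (summable_sum hG1sum) (summable_sum hG2sum)]
      refine tsum_congr fun c => ?_
      rw [← Finset.sum_sub_distrib]
      refine Finset.sum_congr rfl fun j _ => ?_
      by_cases h : c ≤ j
      · rw [if_pos h, if_neg (by omega), sub_zero]
      · rw [if_neg h, if_pos (by omega), sub_self]
    have hPd : ∀ c : ℕ, (∑ j ∈ Finset.range (n + nm + 1),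
          (if c ≤ j then
            v c * (zext w ((c : ℤ) + (i : ℤ) - (j : ℤ)) * a ((n : ℤ) - (j : ℤ))) else 0))
        = ∑ e ∈ Finset.range (i + 1),
            v c * (w (i - e) * a ((n : ℤ) - (c : ℤ) - (e : ℤ))) := by
      intro c
      rw [sum_range_congr_zero _ (n + nm + 1) (c + i + 1)
        (fun j hj => by
          by_cases h : c ≤ j
          · rw [if_pos h]
            rcases le_or_gt (n + nm + 1) j with h2 | h2
            · rw [hsupp _ (Or.inl (by omega)), mul_zero, mul_zero]
            · have h3 : (c : ℤ) + (i : ℤ) - (j : ℤ) < 0 := by omega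
              rw [zext_neg _ h3, zero_mul, mul_zero]
          · rw [if_neg h])]
      rw [sum_range_shift
        (fun j => v c * (zext w ((c : ℤ) + (i : ℤ) - (j : ℤ)) * a ((n : ℤ) - (j : ℤ)))) c i]
      refine Finset.sum_congr rfl fun e he => ?_
      rw [Finset.mem_range] at he
      have e1 : ((c : ℤ) + (i : ℤ) - ((c + e : ℕ) : ℤ)) = (i : ℤ) - (e : ℤ) := by
        push_cast; ring
      have e2 : ((n : ℤ) - ((c + e : ℕ) : ℤ)) = (n : ℤ) - (c : ℤ) - (e : ℤ) := by
        push_cast; ring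
      rw [e1, e2, zext_nonneg _ (by omega : (0:ℤ) ≤ (i : ℤ) - (e : ℤ))]
      have e3 : ((i : ℤ) - (e : ℤ)).toNat = i - e := by omega
      rw [e3]
    have hswap2 : (∑' c : ℕ, ∑ e ∈ Finset.range (i + 1),
          v c * (w (i - e) * a ((n : ℤ) - (c : ℤ) - (e : ℤ))))
        = ∑ e ∈ Finset.range (i + 1), ∑' c : ℕ,
            v c * (w (i - e) * a ((n : ℤ) - (c : ℤ) - (e : ℤ))) := by
      refine Summable.tsum_finsetSum fun e _ => ?_
      refine summable_l1_mul_bdd hv_sum (C := Wb * Ca) fun c => ?_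
      rw [norm_mul]
      exact mul_le_mul (hw_bddn _) (ha_bdd _) (norm_nonneg _) hWb0
    have hJ : ∀ e : ℕ, (∑' c : ℕ, v c * (w (i - e) * a ((n : ℤ) - (c : ℤ) - (e : ℤ))))
        = w (i - e) * zext l ((e : ℤ) - (n : ℤ)) := by
      intro e
      have h2 : ∀ c : ℕ, v c * (w (i - e) * a ((n : ℤ) - (c : ℤ) - (e : ℤ)))
          = ∑ q ∈ Finset.range (nm + 1),
              (zext u (((n : ℤ) - (e : ℤ) + (q : ℤ)) - (c : ℤ)) * v c) * (w (i - e) * l q) := by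
        intro c
        rw [ha2 ((n : ℤ) - (c : ℤ) - (e : ℤ)), Finset.mul_sum, Finset.mul_sum]
        refine Finset.sum_congr rfl fun q _ => ?_
        have e1 : ((n : ℤ) - (c : ℤ) - (e : ℤ) + (q : ℤ))
            = ((n : ℤ) - (e : ℤ) + (q : ℤ)) - (c : ℤ) := by ring
        rw [e1]
        ring
      rw [tsum_congr h2]
      rw [Summable.tsum_finsetSum (fun q _ =>
        ((summable_bdd_mul_l1 hv_sum
          (C := ∑ p ∈ Finset.range (np + 1), ‖u p‖) fun c => hu_bdd _).mul_right
            (w (i - e) * l q)))]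
      have h3 : ∀ q ∈ Finset.range (nm + 1),
          (∑' c : ℕ, (zext u (((n : ℤ) - (e : ℤ) + (q : ℤ)) - (c : ℤ)) * v c)
              * (w (i - e) * l q))
            = w (i - e) * (if (q : ℤ) = (e : ℤ) - (n : ℤ) then l q else 0) := by
        intro q _
        rw [tsum_mul_right, convV ((n : ℤ) - (e : ℤ) + (q : ℤ))]
        by_cases h : (n : ℤ) - (e : ℤ) + (q : ℤ) = 0
        · rw [if_pos h, if_pos (by omega), one_mul]
        · rw [if_neg h, if_neg (by omega), zero_mul, mul_zero]
      rw [Finset.sum_congr rfl h3, ← Finset.mul_sum, sum_ite_coe nm l hl_supp]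
    have hfinal : (∑ e ∈ Finset.range (i + 1), w (i - e) * zext l ((e : ℤ) - (n : ℤ)))
        = if i = n then 1 else 0 := by
      by_cases hni : n ≤ i
      · have h1 : ∀ e ∈ Finset.range (i + 1), w (i - e) * zext l ((e : ℤ) - (n : ℤ))
            = if n ≤ e then l (e - n) * w (i - e) else 0 := by
          intro e _
          by_cases h : n ≤ e
          · rw [if_pos h, zext_nonneg _ (by omega : (0:ℤ) ≤ (e : ℤ) - (n : ℤ))]
            have e1 : ((e : ℤ) - (n : ℤ)).toNat = e - n := by omega
            rw [e1, mul_comm]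
          · rw [if_neg h, zext_neg _ (by omega), mul_zero]
        rw [Finset.sum_congr rfl h1, ← Finset.sum_filter]
        have h2 : (Finset.range (i + 1)).filter (fun e => n ≤ e) = Finset.Ico n (i + 1) := by
          ext e
          simp only [Finset.mem_filter, Finset.mem_range, Finset.mem_Ico]
          omega
        rw [h2, Finset.sum_Ico_eq_sum_range]
        have h3 : i + 1 - n = (i - n) + 1 := by omega
        rw [h3]
        have h4 : ∀ f ∈ Finset.range ((i - n) + 1), l (n + f - n) * w (i - (n + f))
            = l f * w ((i - n) - f) := by
          intro f hf
          rw [Finset.mem_range] at hf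
          have e1 : n + f - n = f := by omega
          have e2 : i - (n + f) = (i - n) - f := by omega
          rw [e1, e2]
        rw [Finset.sum_congr rfl h4, hlw (i - n)]
        by_cases h : i = n
        · rw [if_pos (by omega : i - n = 0), if_pos h]
        · rw [if_neg (by omega : ¬ i - n = 0), if_neg h]
      · have h1 : ∀ e ∈ Finset.range (i + 1), w (i - e) * zext l ((e : ℤ) - (n : ℤ)) = 0 := by
          intro e he
          rw [Finset.mem_range] at he
          rw [zext_neg _ (by omega), mul_zero]
        rw [Finset.sum_eq_zero h1, if_neg (by omega)]
    rw [hcomb, tsum_congr hPd, hswap2, Finset.sum_congr rfl fun e _ => hJ e]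
    exact hfinal
  -- ====================== assembling the operator identities ======================
  set S := Tb - Hw ∘L Hv with hS
  have hsa : ∀ (m j : ℕ) (c : ℂ),
      (lp.single (E := fun _ : ℕ => ℂ) 2 m c) j = if j = m then c else 0 := by
    intro m j c
    rcases eq_or_ne j m with h | h
    · subst h
      rw [lp.single_apply]
      simp
    · rw [lp.single_apply]
      simp [h]
  have hbasisR : ∀ m : ℕ, Ta (S (lp.single 2 m 1)) = lp.single 2 m 1 := by
    intro m
    set x₀ : lp (fun _ : ℕ => ℂ) 2 := lp.single 2 m 1 with hx₀
    have hx : ∀ k : ℕ, x₀ k = if k = m then 1 else 0 := fun k => hsa m k 1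
    have hTbx : ∀ j : ℕ, (Tb x₀) j = b ((m : ℤ) - (j : ℤ)) := by
      intro j
      rw [hTb x₀ j, tsum_eq_single m (fun k hk => by rw [hx k, if_neg hk, mul_zero])]
      rw [hx m, if_pos rfl, mul_one]
    have hHvx : ∀ k : ℕ, (Hv x₀) k = v (k + m + 1) := by
      intro k
      rw [hHv x₀ k, tsum_eq_single m (fun k' hk' => by rw [hx k', if_neg hk', mul_zero])]
      rw [hx m, if_pos rfl, mul_one]
    have hSx : ∀ j : ℕ, (S x₀) j
        = b ((m : ℤ) - (j : ℤ)) - ∑' k : ℕ, w (j + k + 1) * v (k + m + 1) := by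
      intro j
      have h1 : S x₀ = Tb x₀ - Hw (Hv x₀) := by
        rw [hS, ContinuousLinearMap.sub_apply, ContinuousLinearMap.comp_apply]
      rw [h1, lp.coeFn_sub, Pi.sub_apply, hTbx j, hHw (Hv x₀) j]
      congr 1
      exact tsum_congr fun k => by rw [hHvx k]
    apply lp.ext
    funext i
    have h3 : (Ta (S x₀)) i = if i = m then 1 else 0 := by
      rw [hTa (S x₀) i, tsum_congr fun j => by rw [hSx j]]
      exact goalR m i
    rw [h3, hx i]
  have hbasisL : ∀ m : ℕ, S (Ta (lp.single 2 m 1)) = lp.single 2 m 1 := by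
    intro m
    set x₀ : lp (fun _ : ℕ => ℂ) 2 := lp.single 2 m 1 with hx₀
    have hx : ∀ k : ℕ, x₀ k = if k = m then 1 else 0 := fun k => hsa m k 1
    have hTax : ∀ j : ℕ, (Ta x₀) j = a ((m : ℤ) - (j : ℤ)) := by
      intro j
      rw [hTa x₀ j, tsum_eq_single m (fun k hk => by rw [hx k, if_neg hk, mul_zero])]
      rw [hx m, if_pos rfl, mul_one]
    have hTbTax : ∀ i : ℕ, (Tb (Ta x₀)) i
        = ∑' j : ℕ, b ((j : ℤ) - (i : ℤ)) * a ((m : ℤ) - (j : ℤ)) := by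
      intro i
      rw [hTb (Ta x₀) i]
      exact tsum_congr fun j => by rw [hTax j]
    have hHvTax : ∀ j : ℕ, (Hv (Ta x₀)) j
        = ∑' k : ℕ, v (j + k + 1) * a ((m : ℤ) - (k : ℤ)) := by
      intro j
      rw [hHv (Ta x₀) j]
      exact tsum_congr fun k => by rw [hTax k]
    apply lp.ext
    funext i
    have h1 : (S (Ta x₀)) i = ((∑' j : ℕ, b ((j : ℤ) - (i : ℤ)) * a ((m : ℤ) - (j : ℤ)))
        - ∑' j : ℕ, w (i + j + 1) * ∑' k : ℕ, v (j + k + 1) * a ((m : ℤ) - (k : ℤ))) := by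
      have h2 : S (Ta x₀) = Tb (Ta x₀) - Hw (Hv (Ta x₀)) := by
        rw [hS, ContinuousLinearMap.sub_apply, ContinuousLinearMap.comp_apply]
      rw [h2, lp.coeFn_sub, Pi.sub_apply, hTbTax i, hHw (Hv (Ta x₀)) i]
      congr 1
      exact tsum_congr fun j => by rw [hHvTax j]
    rw [h1, goalL m i, hx i]
  have hTaS : Ta ∘L S = 1 := by
    apply ContinuousLinearMap.ext
    intro x
    have h1 : HasSum (fun m : ℕ => lp.single 2 m (x m)) x :=
      lp.hasSum_single ENNReal.ofNat_ne_top x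
    have h2 := (Ta ∘L S).hasSum h1
    have h3 : ∀ m : ℕ, (Ta ∘L S) (lp.single 2 m (x m)) = lp.single 2 m (x m) := by
      intro m
      have h4 : lp.single (E := fun _ : ℕ => ℂ) 2 m (x m) = x m • lp.single 2 m 1 := by
        rw [← lp.single_smul]
        congr 1
        simp [smul_eq_mul]
      rw [h4, map_smul, ContinuousLinearMap.comp_apply, hbasisR m]
    simp only [h3] at h2
    rw [ContinuousLinearMap.one_apply]
    exact h2.unique h1
  have hSTa : S ∘L Ta = 1 := by
    apply ContinuousLinearMap.ext
    intro x
    have h1 : HasSum (fun m : ℕ => lp.single 2 m (x m)) x :=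
      lp.hasSum_single ENNReal.ofNat_ne_top x
    have h2 := (S ∘L Ta).hasSum h1
    have h3 : ∀ m : ℕ, (S ∘L Ta) (lp.single 2 m (x m)) = lp.single 2 m (x m) := by
      intro m
      have h4 : lp.single (E := fun _ : ℕ => ℂ) 2 m (x m) = x m • lp.single 2 m 1 := by
        rw [← lp.single_smul]
        congr 1
        simp [smul_eq_mul]
      rw [h4, map_smul, ContinuousLinearMap.comp_apply, hbasisL m]
    simp only [h3] at h2
    rw [ContinuousLinearMap.one_apply]
    exact h2.unique h1
  refine ⟨?_, hTaS, hSTa, ?_⟩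
  · exact ⟨⟨Ta, S, by rw [ContinuousLinearMap.mul_def]; exact hTaS,
      by rw [ContinuousLinearMap.mul_def]; exact hSTa⟩, rfl⟩
  · calc ‖Hw ∘L Hv‖ ≤ ‖Hw‖ * ‖Hv‖ := ContinuousLinearMap.opNorm_comp_le _ _
      _ ≤ Wb * Vb := mul_le_mul (hankel_norm_le w hw_sum Hw hHw)
          (hankel_norm_le v hv_sum Hv hHv) (norm_nonneg _) hWb0
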